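/- Define A₀ = 1 and recursively A_i = a_i + Σ_{k=1}^{i-1} a_k · [coefficient of t^{i-k} in P^{2k+1}], where a_i = -(-1)^i and P = Σ_{j≥0} A_j t^j. Then A_i equals the i-th Catalan number: A_i = (1/(i+1)) · binomial(2i, i). -/

import Mathlib

open PowerSeries Finset

/-- The Catalan generating function. -/
noncomputable def catalanPS : PowerSeries ℚ := PowerSeries.mk fun n => (catalan n : ℚ)

lemma coeff_catalanPS (n : ℕ) : (PowerSeries.coeff n) catalanPS = (catalan n : ℚ) := by
  simp [catalanPS]

lemma catalanPS_eq : catalanPS = 1 + PowerSeries.X * catalanPS ^ 2 := by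
  ext n
  cases n with
  | zero =>
    simp [catalanPS, coeff_zero_eq_constantCoeff]
  | succ n =>
    rw [map_add, coeff_succ_X_mul, sq, coeff_mul]
    have h1 : (PowerSeries.coeff (n + 1)) (1 : PowerSeries ℚ) = 0 := by
      simp
    rw [h1, zero_add, coeff_catalanPS, catalan_succ']
    push_cast
    exact (Finset.sum_congr rfl fun p _ => by rw [coeff_catalanPS, coeff_catalanPS]).symm

lemma X_mul_catalanPS_sq : PowerSeries.X * catalanPS ^ 2 = catalanPS - 1 := by
  conv_rhs => rw [catalanPS_eq]
  ring

lemma key_identity (N : ℕ) :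
    ∑ k ∈ Finset.Icc 1 N, (-1 : PowerSeries ℚ) ^ (k + 1) *
        (PowerSeries.X ^ k * catalanPS ^ (2 * k + 1)) =
      (catalanPS - 1) - (-1 : PowerSeries ℚ) ^ N * (catalanPS - 1) ^ (N + 1) := by
  induction N with
  | zero => simp
  | succ N ih =>
    rw [Finset.sum_Icc_succ_top (by omega), ih]
    have hpow : PowerSeries.X ^ (N + 1) * catalanPS ^ (2 * (N + 1) + 1) =
        (catalanPS - 1) ^ (N + 1) * catalanPS := by
      have : 2 * (N + 1) + 1 = 2 * (N + 1) + 1 := rfl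
      calc PowerSeries.X ^ (N + 1) * catalanPS ^ (2 * (N + 1) + 1)
          = (PowerSeries.X * catalanPS ^ 2) ^ (N + 1) * catalanPS := by
            rw [mul_pow, ← pow_mul]; ring_nf
        _ = (catalanPS - 1) ^ (N + 1) * catalanPS := by rw [X_mul_catalanPS_sq]
    rw [hpow]
    ring

lemma pow_coeff_congr (f g : PowerSeries ℚ) (n : ℕ)
    (h : ∀ j ≤ n, PowerSeries.coeff j f = PowerSeries.coeff j g) (m : ℕ) :
    ∀ j ≤ n, PowerSeries.coeff j (f ^ m) = PowerSeries.coeff j (g ^ m) := by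
  induction m with
  | zero => simp
  | succ m ih =>
    intro j hj
    rw [pow_succ, pow_succ, coeff_mul, coeff_mul]
    refine Finset.sum_congr rfl fun p hp => ?_
    rw [Finset.HasAntidiagonal.mem_antidiagonal] at hp
    rw [ih p.1 (by omega), h p.2 (by omega)]

lemma neg_one_pow_eq (k : ℕ) :
    (-1 : PowerSeries ℚ) ^ k = PowerSeries.C ((-1 : ℚ) ^ k) := by
  rw [map_pow, map_neg, map_one]

lemma catalan_coeff_identity (i : ℕ) (hi : 1 ≤ i) :
    (-(-1 : ℚ) ^ i) + ∑ k ∈ Finset.Icc 1 (i - 1), (-(-1 : ℚ) ^ k) *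
        PowerSeries.coeff (i - k) (catalanPS ^ (2 * k + 1)) = (catalan i : ℚ) := by
  obtain ⟨n, rfl⟩ : ∃ n, i = n + 1 := ⟨i - 1, (Nat.succ_pred_eq_of_pos hi).symm⟩
  have h := congrArg (PowerSeries.coeff (n + 1)) (key_identity (n + 1))
  rw [map_sum, map_sub, map_sub] at h
  -- compute each term on the left
  have hterm : ∀ k ∈ Finset.Icc 1 (n + 1),
      (PowerSeries.coeff (n + 1)) ((-1 : PowerSeries ℚ) ^ (k + 1) *
        (PowerSeries.X ^ k * catalanPS ^ (2 * k + 1))) =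
      (-(-1 : ℚ) ^ k) * PowerSeries.coeff (n + 1 - k) (catalanPS ^ (2 * k + 1)) := by
    intro k hk
    rw [Finset.mem_Icc] at hk
    rw [neg_one_pow_eq, coeff_C_mul, coeff_X_pow_mul', if_pos (by omega : k ≤ n + 1)]
    ring
  rw [Finset.sum_congr rfl hterm] at h
  -- right side
  have hC1 : (PowerSeries.coeff (n + 1)) catalanPS = (catalan (n + 1) : ℚ) := coeff_catalanPS _
  have hone : (PowerSeries.coeff (n + 1)) (1 : PowerSeries ℚ) = 0 := by simp
  -- the correction term vanishes
  have hvan : (PowerSeries.coeff (n + 1))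
      ((-1 : PowerSeries ℚ) ^ (n + 1) * (catalanPS - 1) ^ (n + 1 + 1)) = 0 := by
    rw [neg_one_pow_eq, coeff_C_mul]
    have : (catalanPS - 1) ^ (n + 2) = (catalanPS ^ 2) ^ (n + 2) * PowerSeries.X ^ (n + 2) := by
      rw [← X_mul_catalanPS_sq, mul_pow]; ring
    rw [this, coeff_mul_X_pow']
    simp
  rw [hC1, hone, hvan, sub_zero, sub_zero] at h
  -- split off the top term k = n + 1 from the sum
  rw [Finset.sum_Icc_succ_top (by omega : 1 ≤ n + 1)] at h
  have htop : (-(-1 : ℚ) ^ (n + 1)) *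
      PowerSeries.coeff (n + 1 - (n + 1)) (catalanPS ^ (2 * (n + 1) + 1)) =
      -(-1 : ℚ) ^ (n + 1) := by
    have h0 : n + 1 - (n + 1) = 0 := by omega
    rw [h0, coeff_zero_eq_constantCoeff, map_pow]
    have : (PowerSeries.constantCoeff) catalanPS = 1 := by
      simp [catalanPS, ← coeff_zero_eq_constantCoeff]
    rw [this, one_pow, mul_one]
  rw [htop] at h
  have hsum : ∀ k ∈ Finset.Icc 1 (n + 1 - 1), (-(-1 : ℚ) ^ k) *
      PowerSeries.coeff (n + 1 - k) (catalanPS ^ (2 * k + 1)) =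
      (-(-1 : ℚ) ^ k) * PowerSeries.coeff (n + 1 - k) (catalanPS ^ (2 * k + 1)) :=
    fun _ _ => rfl
  simp only [Nat.add_sub_cancel]
  linarith [h]

/-- If `A₀ = 1` and `A_i = a_i + Σ_{k=1}^{i-1} a_k · [t^{i-k}] P^{2k+1}` for `i ≥ 1`,
with `a_k = -(-1)^k` and `P = Σ_j A_j t^j`, then `A_i` is the `i`-th Catalan number
`binomial(2i,i)/(i+1)`. -/
theorem recursion_gives_catalan (A : ℕ → ℚ) (hA0 : A 0 = 1)
    (hA : ∀ i : ℕ, 1 ≤ i → A i = (-(-1 : ℚ) ^ i) +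
      ∑ k ∈ Finset.Icc 1 (i - 1), (-(-1 : ℚ) ^ k) *
        PowerSeries.coeff (i - k) ((PowerSeries.mk A) ^ (2 * k + 1))) :
    ∀ i : ℕ, A i = (Nat.choose (2 * i) i : ℚ) / ((i : ℚ) + 1) := by
  have hcat : ∀ i : ℕ, A i = (catalan i : ℚ) := by
    intro i
    induction i using Nat.strong_induction_on with
    | _ i ih =>
      rcases Nat.eq_zero_or_pos i with h0 | hpos
      · subst h0; simpa using hA0
      · rw [hA i hpos]
        have hco : ∀ k ∈ Finset.Icc 1 (i - 1),
            PowerSeries.coeff (i - k) ((PowerSeries.mk A) ^ (2 * k + 1)) =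
            PowerSeries.coeff (i - k) (catalanPS ^ (2 * k + 1)) := by
          intro k hk
          rw [Finset.mem_Icc] at hk
          refine pow_coeff_congr _ _ (i - 1) ?_ (2 * k + 1) (i - k) (by omega)
          intro j hj
          rw [coeff_mk, coeff_catalanPS, ih j (by omega)]
        rw [Finset.sum_congr rfl fun k hk => by rw [hco k hk]]
        exact catalan_coeff_identity i hpos
  intro i
  rw [hcat i, eq_div_iff (by positivity)]
  have h := succ_mul_catalan_eq_centralBinom i
  rw [Nat.centralBinom_eq_two_mul_choose] at h
  rw [mul_comm]
  exact_mod_cast congrArg (Nat.cast : ℕ → ℚ) h
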